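/- Let γ, E₁, E₂, x ∈ ℝ³ with D := ⟨x−γ, γ−E₁⟩ + ‖x−γ‖(‖x−γ‖+‖x−E₂‖) > 0, and let c := N/(2D) where N := (‖x−γ‖+‖x−E₂‖)² − ‖γ−E₁‖². Then c < 1 if and only if ‖x−E₂‖ < ‖x−E₁‖, and c > 1 if and only if ‖x−E₂‖ > ‖x−E₁‖. -/

import Mathlib

theorem stmt_6 (γ E₁ E₂ x : EuclideanSpace ℝ (Fin 3))
    (N D c : ℝ)
    (hN : N = (‖x - γ‖ + ‖x - E₂‖) ^ 2 - ‖γ - E₁‖ ^ 2)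
    (hD : D = (inner ℝ (x - γ) (γ - E₁) : ℝ) + ‖x - γ‖ * (‖x - γ‖ + ‖x - E₂‖))
    (hDpos : 0 < D) (hc : c = N / (2 * D)) :
    (c < 1 ↔ ‖x - E₂‖ < ‖x - E₁‖) ∧ (c > 1 ↔ ‖x - E₂‖ > ‖x - E₁‖) := by
  have key : ‖x - E₁‖ ^ 2 = ‖x - γ‖ ^ 2 + 2 * (inner ℝ (x - γ) (γ - E₁) : ℝ) + ‖γ - E₁‖ ^ 2 := by
    have h : x - E₁ = (x - γ) + (γ - E₁) := by abel
    rw [h, norm_add_sq_real]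
  have hNB : N - 2 * D = ‖x - E₂‖ ^ 2 - ‖x - E₁‖ ^ 2 := by
    rw [hN, hD, key]; ring
  have h2 : ‖x - E₂‖ ≥ 0 := norm_nonneg _
  have h1 : ‖x - E₁‖ ≥ 0 := norm_nonneg _
  have hsq : ‖x - E₂‖ ^ 2 < ‖x - E₁‖ ^ 2 ↔ ‖x - E₂‖ < ‖x - E₁‖ := by
    constructor <;> intro h <;> nlinarith
  have hsq2 : ‖x - E₁‖ ^ 2 < ‖x - E₂‖ ^ 2 ↔ ‖x - E₁‖ < ‖x - E₂‖ := by
    constructor <;> intro h <;> nlinarith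
  have h2D : (0:ℝ) < 2 * D := by linarith
  constructor
  · rw [hc, div_lt_one h2D, ← hsq]
    constructor <;> intro h <;> nlinarith
  · rw [hc, gt_iff_lt, lt_div_iff₀ h2D]
    constructor
    · intro h
      have h' : ‖x - E₁‖ ^ 2 < ‖x - E₂‖ ^ 2 := by nlinarith
      exact hsq2.mp h'
    · intro h
      have h' := hsq2.mpr h
      nlinarith
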